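/- arXiv:2203.00582 — 3 statements merged into one kernel-verified Lean document; each statement's English description precedes it below -/
import Mathlib

section
/- Under the same setup (velocity kinematics of the 3-DOF manipulator, differentiable reference trajectory, positive gains k_x, k_y, k_z, nonzero controller denominators, and the velocity controller ω_φ, ω_θ, v_D), define the Lyapunov function V(t) = ½ e_x(t)² + ½ e_y(t)² + ½ e_z(t)². Then along the closed-loop trajectories V is differentiable with V′(t) = −k_x e_x(t)² − k_y e_y(t)² − k_z e_z(t)² ≤ 0 for all t; in particular V is non-increasing. -/
/-- Lyapunov analysis of the closed loop: with
`V = ½ e_x² + ½ e_y² + ½ e_z²`, along the closed-loop trajectories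
`V′ = −k_x e_x² − k_y e_y² − k_z e_z² ≤ 0`, and `V` is non-increasing. -/
theorem lyapunov_derivative_nonincreasing
    (dx2 dx3 dz2 kx ky kz : ℝ)
    (hkx : 0 < kx) (hky : 0 < ky) (hkz : 0 < kz)
    (x y z xr yr zr φ θ ωφ ωθ vD : ℝ → ℝ)
    (hx : Differentiable ℝ x) (hy : Differentiable ℝ y)
    (hz : Differentiable ℝ z)
    (hxr : Differentiable ℝ xr) (hyr : Differentiable ℝ yr)
    (hzr : Differentiable ℝ zr)
    (hden1 : ∀ t, dx3 * Real.cos (φ t) ≠ 0)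
    (hden2 : ∀ t, dx3 * Real.cos (θ t) * Real.cos (φ t)
        + dx2 * Real.cos (θ t) + dz2 * Real.sin (θ t) ≠ 0)
    (hωφ : ∀ t, ωφ t = (-(ky * (y t - yr t)) + deriv yr t)
        / (dx3 * Real.cos (φ t)))
    (hωθ : ∀ t, ωθ t = (kz * (z t - zr t)
        + dx3 * Real.sin (θ t) * Real.sin (φ t) * ωφ t - deriv zr t)
        / (dx3 * Real.cos (θ t) * Real.cos (φ t)
          + dx2 * Real.cos (θ t) + dz2 * Real.sin (θ t)))
    (hvD : ∀ t, vD t = -(kx * (x t - xr t))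
        + dx3 * (Real.sin (θ t) * Real.cos (φ t) * ωθ t
          + Real.cos (θ t) * Real.sin (φ t) * ωφ t)
        + dx2 * Real.sin (θ t) * ωθ t - dz2 * Real.cos (θ t) * ωθ t
        + deriv xr t)
    (hkinx : ∀ t, deriv x t = -(dx3 * (Real.sin (θ t) * Real.cos (φ t) * ωθ t
        + Real.cos (θ t) * Real.sin (φ t) * ωφ t))
        - dx2 * Real.sin (θ t) * ωθ t + dz2 * Real.cos (θ t) * ωθ t + vD t)
    (hkiny : ∀ t, deriv y t = dx3 * Real.cos (φ t) * ωφ t)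
    (hkinz : ∀ t, deriv z t = -(dx3 * (Real.cos (θ t) * Real.cos (φ t) * ωθ t
        - Real.sin (θ t) * Real.sin (φ t) * ωφ t))
        - dx2 * Real.cos (θ t) * ωθ t - dz2 * Real.sin (θ t) * ωθ t)
    (V : ℝ → ℝ)
    (hV : ∀ t, V t = (1 / 2) * (x t - xr t) ^ 2
        + (1 / 2) * (y t - yr t) ^ 2 + (1 / 2) * (z t - zr t) ^ 2) :
    (∀ t, HasDerivAt V
        (-(kx * (x t - xr t) ^ 2) - ky * (y t - yr t) ^ 2
          - kz * (z t - zr t) ^ 2) t) ∧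
    (∀ t, -(kx * (x t - xr t) ^ 2) - ky * (y t - yr t) ^ 2
        - kz * (z t - zr t) ^ 2 ≤ 0) ∧
    Antitone V := by
  -- error derivatives
  have hex : ∀ t, deriv x t - deriv xr t = -(kx * (x t - xr t)) := by
    intro t; rw [hkinx t, hvD t]; ring
  have hey : ∀ t, deriv y t - deriv yr t = -(ky * (y t - yr t)) := by
    intro t; rw [hkiny t, hωφ t]
    field_simp [hden1 t]
    rw [mul_div_cancel_left₀ _ (hden1 t)]; ring
  have hez : ∀ t, deriv z t - deriv zr t = -(kz * (z t - zr t)) := by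
    intro t; rw [hkinz t, hωθ t]
    have hw := div_mul_cancel₀ (kz * (z t - zr t) + dx3 * Real.sin (θ t) * Real.sin (φ t) * ωφ t - deriv zr t) (hden2 t)
    linear_combination (-1 : ℝ) * hw
  have hVd : ∀ t, HasDerivAt V
      (-(kx * (x t - xr t) ^ 2) - ky * (y t - yr t) ^ 2
        - kz * (z t - zr t) ^ 2) t := by
    intro t
    have hVfun : V = fun s => (1 / 2) * (x s - xr s) ^ 2
        + (1 / 2) * (y s - yr s) ^ 2 + (1 / 2) * (z s - zr s) ^ 2 := funext hV
    have h1 : HasDerivAt (fun s => x s - xr s) (deriv x t - deriv xr t) t :=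
      (hx t).hasDerivAt.sub (hxr t).hasDerivAt
    have h2 : HasDerivAt (fun s => y s - yr s) (deriv y t - deriv yr t) t :=
      (hy t).hasDerivAt.sub (hyr t).hasDerivAt
    have h3 : HasDerivAt (fun s => z s - zr s) (deriv z t - deriv zr t) t :=
      (hz t).hasDerivAt.sub (hzr t).hasDerivAt
    have H := (((h1.pow 2).const_mul ((1:ℝ)/2)).add
        ((h2.pow 2).const_mul ((1:ℝ)/2))).add ((h3.pow 2).const_mul ((1:ℝ)/2))
    rw [hVfun]
    refine H.congr_deriv ?_
    rw [hex t, hey t, hez t]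
    ring
  refine ⟨hVd, fun t => ?_, ?_⟩
  · nlinarith [sq_nonneg (x t - xr t), sq_nonneg (y t - yr t), sq_nonneg (z t - zr t)]
  · apply antitone_of_deriv_nonpos
    · exact fun t => (hVd t).differentiableAt
    · intro t
      rw [(hVd t).deriv]
      nlinarith [sq_nonneg (x t - xr t), sq_nonneg (y t - yr t), sq_nonneg (z t - zr t)]
end

section
/- (Asymptotic tracking, Theorem 1.) Under the same setup (velocity kinematics of the 3-DOF manipulator, differentiable reference trajectory (x_r, y_r, z_r), positive gains k_x, k_y, k_z, nonzero controller denominators, and the velocity controller ω_φ, ω_θ, v_D), the end-effector position converges to the reference trajectory: for all t ≥ 0, e_x(t) = e_x(0)·exp(−k_x t), e_y(t) = e_y(0)·exp(−k_y t), e_z(t) = e_z(0)·exp(−k_z t); consequently e_x(t), e_y(t), e_z(t) → 0 as t → ∞, i.e. (x(t), y(t), z(t)) converges to (x_r(t), y_r(t), z_r(t)) asymptotically. -/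
private lemma exp_decay_aux (k : ℝ) (e : ℝ → ℝ) (he : Differentiable ℝ e)
    (hde : ∀ t, deriv e t = -(k * e t)) :
    ∀ t, e t = e 0 * Real.exp (-(k * t)) := by
  have hkey : ∀ t, e t * Real.exp (k * t) = e 0 := by
    have hdiff : Differentiable ℝ (fun t => e t * Real.exp (k * t)) := by
      exact he.mul (Real.differentiable_exp.comp (differentiable_const _|>.mul differentiable_id))
    have hderiv : ∀ t, deriv (fun t => e t * Real.exp (k * t)) t = 0 := by
      intro t
      have h1 : HasDerivAt e (deriv e t) t := (he t).hasDerivAt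
      have h2 : HasDerivAt (fun s : ℝ => k * s) k t := by
        simpa using (hasDerivAt_id t).const_mul k
      have h3 : HasDerivAt (fun s : ℝ => Real.exp (k * s)) (Real.exp (k * t) * k) t :=
        (Real.hasDerivAt_exp (k * t)).comp t h2
      have h4 : deriv (fun t => e t * Real.exp (k * t)) t = _ := (h1.mul h3).deriv
      rw [h4, hde t]; ring
    intro t
    have := is_const_of_deriv_eq_zero hdiff hderiv t 0
    simpa using this
  intro t
  calc e t = e t * (Real.exp (k * t) * Real.exp (-(k * t))) := by
        rw [← Real.exp_add, add_neg_cancel, Real.exp_zero, mul_one]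
    _ = (e t * Real.exp (k * t)) * Real.exp (-(k * t)) := by ring
    _ = e 0 * Real.exp (-(k * t)) := by rw [hkey t]

private lemma tendsto_aux (k c : ℝ) (hk : 0 < k) :
    Filter.Tendsto (fun t => c * Real.exp (-(k * t))) Filter.atTop (nhds 0) := by
  have h1 : Filter.Tendsto (fun t : ℝ => k * t) Filter.atTop Filter.atTop :=
    Filter.Tendsto.const_mul_atTop hk Filter.tendsto_id
  have h2 : Filter.Tendsto (fun t : ℝ => -(k * t)) Filter.atTop Filter.atBot :=
    Filter.tendsto_neg_atTop_atBot.comp h1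
  have h3 : Filter.Tendsto (fun t : ℝ => Real.exp (-(k * t))) Filter.atTop (nhds 0) :=
    Real.tendsto_exp_atBot.comp h2
  simpa using h3.const_mul c


/-- Asymptotic tracking (Theorem 1): under the nonlinear velocity controller,
the tracking errors decay exponentially, `e(t) = e(0)·exp(−k t)` for `t ≥ 0`
componentwise, and hence converge to zero, i.e. the end-effector position
converges to the reference trajectory asymptotically. -/
theorem asymptotic_tracking
    (dx2 dx3 dz2 kx ky kz : ℝ)
    (hkx : 0 < kx) (hky : 0 < ky) (hkz : 0 < kz)
    (x y z xr yr zr φ θ ωφ ωθ vD : ℝ → ℝ)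
    (hx : Differentiable ℝ x) (hy : Differentiable ℝ y)
    (hz : Differentiable ℝ z)
    (hxr : Differentiable ℝ xr) (hyr : Differentiable ℝ yr)
    (hzr : Differentiable ℝ zr)
    (hden1 : ∀ t, dx3 * Real.cos (φ t) ≠ 0)
    (hden2 : ∀ t, dx3 * Real.cos (θ t) * Real.cos (φ t)
        + dx2 * Real.cos (θ t) + dz2 * Real.sin (θ t) ≠ 0)
    (hωφ : ∀ t, ωφ t = (-(ky * (y t - yr t)) + deriv yr t)
        / (dx3 * Real.cos (φ t)))
    (hωθ : ∀ t, ωθ t = (kz * (z t - zr t)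
        + dx3 * Real.sin (θ t) * Real.sin (φ t) * ωφ t - deriv zr t)
        / (dx3 * Real.cos (θ t) * Real.cos (φ t)
          + dx2 * Real.cos (θ t) + dz2 * Real.sin (θ t)))
    (hvD : ∀ t, vD t = -(kx * (x t - xr t))
        + dx3 * (Real.sin (θ t) * Real.cos (φ t) * ωθ t
          + Real.cos (θ t) * Real.sin (φ t) * ωφ t)
        + dx2 * Real.sin (θ t) * ωθ t - dz2 * Real.cos (θ t) * ωθ t
        + deriv xr t)
    (hkinx : ∀ t, deriv x t = -(dx3 * (Real.sin (θ t) * Real.cos (φ t) * ωθ t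
        + Real.cos (θ t) * Real.sin (φ t) * ωφ t))
        - dx2 * Real.sin (θ t) * ωθ t + dz2 * Real.cos (θ t) * ωθ t + vD t)
    (hkiny : ∀ t, deriv y t = dx3 * Real.cos (φ t) * ωφ t)
    (hkinz : ∀ t, deriv z t = -(dx3 * (Real.cos (θ t) * Real.cos (φ t) * ωθ t
        - Real.sin (θ t) * Real.sin (φ t) * ωφ t))
        - dx2 * Real.cos (θ t) * ωθ t - dz2 * Real.sin (θ t) * ωθ t) :
    (∀ t, 0 ≤ t →
      x t - xr t = (x 0 - xr 0) * Real.exp (-(kx * t)) ∧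
      y t - yr t = (y 0 - yr 0) * Real.exp (-(ky * t)) ∧
      z t - zr t = (z 0 - zr 0) * Real.exp (-(kz * t))) ∧
    Filter.Tendsto (fun t => x t - xr t) Filter.atTop (nhds 0) ∧
    Filter.Tendsto (fun t => y t - yr t) Filter.atTop (nhds 0) ∧
    Filter.Tendsto (fun t => z t - zr t) Filter.atTop (nhds 0) := by
  have hex : ∀ t, deriv (fun s => x s - xr s) t = -(kx * (x t - xr t)) := by
    intro t
    rw [deriv_fun_sub (hx t) (hxr t), hkinx t, hvD t]; ring
  have hey : ∀ t, deriv (fun s => y s - yr s) t = -(ky * (y t - yr t)) := by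
    intro t
    rw [deriv_fun_sub (hy t) (hyr t), hkiny t, hωφ t,
      mul_div_cancel₀ _ (hden1 t)]
    ring
  have hez : ∀ t, deriv (fun s => z s - zr s) t = -(kz * (z t - zr t)) := by
    intro t
    rw [deriv_fun_sub (hz t) (hzr t), hkinz t, hωθ t]
    have hD := mul_div_cancel₀ (kz * (z t - zr t)
        + dx3 * Real.sin (θ t) * Real.sin (φ t) * ωφ t - deriv zr t) (hden2 t)
    linear_combination -hD
  have hX := exp_decay_aux kx (fun s => x s - xr s) (hx.sub hxr) hex
  have hY := exp_decay_aux ky (fun s => y s - yr s) (hy.sub hyr) hey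
  have hZ := exp_decay_aux kz (fun s => z s - zr s) (hz.sub hzr) hez
  refine ⟨fun t _ => ⟨hX t, hY t, hZ t⟩, ?_, ?_, ?_⟩
  · exact ((tendsto_aux kx (x 0 - xr 0) hkx).congr (fun t => (hX t).symm))
  · exact ((tendsto_aux ky (y 0 - yr 0) hky).congr (fun t => (hY t).symm))
  · exact ((tendsto_aux kz (z 0 - zr 0) hkz).congr (fun t => (hZ t).symm))
end

section
/- Under the same setup (closed-loop error dynamics e_x′ = −k_x e_x, e_y′ = −k_y e_y, e_z′ = −k_z e_z with k_x, k_y, k_z > 0), the Euclidean norm of the tracking error vector e(t) = (e_x(t), e_y(t), e_z(t)) is bounded by its initial value and decays at least exponentially with rate k = min(k_x, k_y, k_z): for all t ≥ 0, ‖e(t)‖ ≤ ‖e(0)‖·exp(−k t) ≤ ‖e(0)‖. -/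
lemma decay_sol (k : ℝ) (f : ℝ → ℝ) (hf : ∀ t, HasDerivAt f (-(k * f t)) t) :
    ∀ t, f t = f 0 * Real.exp (-(k * t)) := by
  have key : ∀ t, f t * Real.exp (k * t) = f 0 := by
    have hdiff : Differentiable ℝ (fun t => f t * Real.exp (k * t)) := by
      intro t
      exact ((hf t).mul (((Real.hasDerivAt_exp _).comp t
        ((hasDerivAt_id t).const_mul k)).comp t (hasDerivAt_id t))).differentiableAt
    have hderiv : ∀ t, deriv (fun t => f t * Real.exp (k * t)) t = 0 := by
      intro t
      have h1 : HasDerivAt (fun t => Real.exp (k * t)) (Real.exp (k * t) * k) t := by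
        have h0 := (Real.hasDerivAt_exp (k * t)).comp t ((hasDerivAt_id t).const_mul k)
        rw [mul_one] at h0
        exact h0
      have h2 := (hf t).mul h1
      have := h2.deriv
      rw [show (fun t => f t * Real.exp (k * t)) = (f * fun t => Real.exp (k * t)) from rfl, this]; ring
    have := is_const_of_deriv_eq_zero hdiff hderiv
    intro t; simpa using this t 0
  intro t
  have h := key t
  have hexp : Real.exp (k * t) ≠ 0 := Real.exp_ne_zero _
  field_simp [Real.exp_neg] at *
  rw [Real.exp_neg, ← h, mul_assoc, mul_inv_cancel₀ hexp, mul_one]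

/-- Exponential decay of the Euclidean norm of the tracking error: under the
decoupled closed-loop dynamics `e_x′ = −k_x e_x`, `e_y′ = −k_y e_y`,
`e_z′ = −k_z e_z` with positive gains, the Euclidean norm of the error vector
satisfies `‖e(t)‖ ≤ ‖e(0)‖·exp(−k t) ≤ ‖e(0)‖` for all `t ≥ 0`, where
`k = min(k_x, k_y, k_z)`. -/
theorem error_norm_exponential_decay
    (kx ky kz : ℝ) (hkx : 0 < kx) (hky : 0 < ky) (hkz : 0 < kz)
    (ex ey ez : ℝ → ℝ)
    (hex : ∀ t, HasDerivAt ex (-(kx * ex t)) t)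
    (hey : ∀ t, HasDerivAt ey (-(ky * ey t)) t)
    (hez : ∀ t, HasDerivAt ez (-(kz * ez t)) t) :
    ∀ t, 0 ≤ t →
      Real.sqrt (ex t ^ 2 + ey t ^ 2 + ez t ^ 2)
        ≤ Real.sqrt (ex 0 ^ 2 + ey 0 ^ 2 + ez 0 ^ 2)
          * Real.exp (-(min kx (min ky kz) * t)) ∧
      Real.sqrt (ex 0 ^ 2 + ey 0 ^ 2 + ez 0 ^ 2)
          * Real.exp (-(min kx (min ky kz) * t))
        ≤ Real.sqrt (ex 0 ^ 2 + ey 0 ^ 2 + ez 0 ^ 2) := by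
  intro t ht
  set k := min kx (min ky kz) with hk
  have hx := decay_sol kx ex hex t
  have hy := decay_sol ky ey hey t
  have hz := decay_sol kz ez hez t
  have hkkx : k ≤ kx := min_le_left _ _
  have hkky : k ≤ ky := le_trans (min_le_right _ _) (min_le_left _ _)
  have hkkz : k ≤ kz := le_trans (min_le_right _ _) (min_le_right _ _)
  have hexp_le : ∀ a, k ≤ a → Real.exp (-(a * t)) ≤ Real.exp (-(k * t)) := by
    intro a ha
    exact Real.exp_le_exp.mpr (by nlinarith)
  have hE : (0:ℝ) ≤ Real.exp (-(k * t)) := (Real.exp_pos _).le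
  have hsq : ∀ (c a : ℝ), k ≤ a → (c * Real.exp (-(a * t)))^2 ≤ c^2 * Real.exp (-(k*t))^2 := by
    intro c a ha
    have h1 := hexp_le a ha
    have h2 : (0:ℝ) ≤ Real.exp (-(a*t)) := (Real.exp_pos _).le
    nlinarith [sq_nonneg c, mul_self_le_mul_self h2 h1]
  have hsum : ex t ^ 2 + ey t ^ 2 + ez t ^ 2
      ≤ (ex 0 ^ 2 + ey 0 ^ 2 + ez 0 ^ 2) * Real.exp (-(k*t))^2 := by
    rw [hx, hy, hz]
    have := hsq (ex 0) kx hkkx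
    have := hsq (ey 0) ky hkky
    have := hsq (ez 0) kz hkkz
    nlinarith
  constructor
  · calc Real.sqrt (ex t ^ 2 + ey t ^ 2 + ez t ^ 2)
        ≤ Real.sqrt ((ex 0 ^ 2 + ey 0 ^ 2 + ez 0 ^ 2) * Real.exp (-(k*t))^2) :=
          Real.sqrt_le_sqrt hsum
      _ = Real.sqrt (ex 0 ^ 2 + ey 0 ^ 2 + ez 0 ^ 2) * Real.exp (-(k*t)) := by
          rw [Real.sqrt_mul (by positivity), Real.sqrt_sq hE]
  · have h1 : Real.exp (-(k * t)) ≤ 1 := by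
      apply Real.exp_le_one_iff.mpr
      have hk0 : 0 < k := lt_min hkx (lt_min hky hkz)
      nlinarith
    nlinarith [Real.sqrt_nonneg (ex 0 ^ 2 + ey 0 ^ 2 + ez 0 ^ 2)]
end
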